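/- arXiv:2102.01248 — 4 statements merged into one kernel-verified Lean document; each statement's English description precedes it below -/
import Mathlib

section
/- Let σ_K(ξ) = 1 − ξ². There exists N₀ such that for all N ≥ N₀, with T = 1/(100N³), for all s, t with 0 ≤ s ≤ t ≤ T, and all ξ, ξ₁ ∈ ℝ with N/2 ≤ |ξ₁| ≤ 2N, N/2 ≤ |ξ − ξ₁| ≤ 2N, and 1/2 ≤ |ξ| ≤ 2, one has −sin(ξσ_K(ξ)(t−s))·sin(ξ₁σ_K(ξ₁)s)·cos((ξ−ξ₁)σ_K(ξ−ξ₁)s) + (1/2)·cos(ξσ_K(ξ)(t−s))·cos(ξ₁σ_K(ξ₁)s)·cos((ξ−ξ₁)σ_K(ξ−ξ₁)s) ≥ 1/32. -/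
noncomputable def sigmaK (ξ : ℝ) : ℝ := 1 - ξ ^ 2

lemma phase_bound {x M t T : ℝ} (hx : |x| ≤ M) (ht0 : 0 ≤ t) (ht : t ≤ T)
    (hT0 : 0 ≤ T) (hMT : (M + M ^ 3) * T ≤ 1 / 10) : |x * sigmaK x * t| ≤ 1 / 10 := by
  have hM : 0 ≤ M := le_trans (abs_nonneg x) hx
  have h1 : |x * sigmaK x * t| = |x| * |1 - x ^ 2| * t := by
    rw [abs_mul, abs_mul, abs_of_nonneg ht0, sigmaK]
  have hsq : x ^ 2 ≤ M ^ 2 := by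
    have := pow_le_pow_left₀ (abs_nonneg x) hx 2
    rwa [sq_abs] at this
  have h2 : |1 - x ^ 2| ≤ 1 + M ^ 2 := by
    rw [abs_le]; constructor <;> nlinarith [sq_nonneg x]
  rw [h1]
  calc |x| * |1 - x ^ 2| * t ≤ M * (1 + M ^ 2) * T := by
        apply mul_le_mul _ ht ht0
        · positivity
        · exact mul_le_mul hx h2 (abs_nonneg _) hM
    _ = (M + M ^ 3) * T := by ring
    _ ≤ 1 / 10 := hMT

lemma cos_lb {x : ℝ} (h : |x| ≤ 1 / 10) : 199 / 200 ≤ Real.cos x := by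
  have hsq : x ^ 2 ≤ (1 / 10) ^ 2 := by
    have := pow_le_pow_left₀ (abs_nonneg x) h 2
    rwa [sq_abs] at this
  have := Real.one_sub_sq_div_two_le_cos (x := x)
  nlinarith

theorem stmt_2 :
    ∃ N₀ : ℝ, ∀ N : ℝ, N₀ ≤ N →
      ∀ s t : ℝ, 0 ≤ s → s ≤ t → t ≤ 1 / (100 * N ^ 3) →
      ∀ ξ ξ₁ : ℝ,
        N / 2 ≤ |ξ₁| → |ξ₁| ≤ 2 * N →
        N / 2 ≤ |ξ - ξ₁| → |ξ - ξ₁| ≤ 2 * N →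
        1 / 2 ≤ |ξ| → |ξ| ≤ 2 →
        -(Real.sin (ξ * sigmaK ξ * (t - s)) * Real.sin (ξ₁ * sigmaK ξ₁ * s)) *
            Real.cos ((ξ - ξ₁) * sigmaK (ξ - ξ₁) * s)
          + (1 / 2) * Real.cos (ξ * sigmaK ξ * (t - s)) *
              Real.cos (ξ₁ * sigmaK ξ₁ * s) *
              Real.cos ((ξ - ξ₁) * sigmaK (ξ - ξ₁) * s)
          ≥ 1 / 32 := by
  refine ⟨1, fun N hN s t hs hst ht ξ ξ₁ h1 h2 h3 h4 h5 h6 => ?_⟩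
  have hN3 : (1:ℝ) ≤ N ^ 3 := one_le_pow₀ hN
  have hT0 : (0:ℝ) ≤ 1 / (100 * N ^ 3) := by positivity
  have hA : |ξ * sigmaK ξ * (t - s)| ≤ 1 / 10 := by
    apply phase_bound h6 (by linarith) (by linarith : t - s ≤ 1 / (100 * N ^ 3)) hT0
    rw [mul_one_div, div_le_div_iff₀ (by positivity) (by norm_num)]
    nlinarith
  have hB : |ξ₁ * sigmaK ξ₁ * s| ≤ 1 / 10 := by
    apply phase_bound h2 hs (by linarith : s ≤ 1 / (100 * N ^ 3)) hT0
    rw [mul_one_div, div_le_div_iff₀ (by positivity) (by norm_num)]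
    nlinarith [sq_nonneg N, sq_nonneg (N-1), sq_nonneg (N^2-1)]
  have hC : |(ξ - ξ₁) * sigmaK (ξ - ξ₁) * s| ≤ 1 / 10 := by
    apply phase_bound h4 hs (by linarith : s ≤ 1 / (100 * N ^ 3)) hT0
    rw [mul_one_div, div_le_div_iff₀ (by positivity) (by norm_num)]
    nlinarith [sq_nonneg N, sq_nonneg (N-1), sq_nonneg (N^2-1)]
  set A := ξ * sigmaK ξ * (t - s)
  set B := ξ₁ * sigmaK ξ₁ * s
  set C := (ξ - ξ₁) * sigmaK (ξ - ξ₁) * s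
  have hsA : |Real.sin A| ≤ 1 / 10 := le_trans (Real.abs_sin_le_abs) hA
  have hsB : |Real.sin B| ≤ 1 / 10 := le_trans (Real.abs_sin_le_abs) hB
  have hcA : 199 / 200 ≤ Real.cos A := cos_lb hA
  have hcB : 199 / 200 ≤ Real.cos B := cos_lb hB
  have hcC : 199 / 200 ≤ Real.cos C := cos_lb hC
  have hcC1 : Real.cos C ≤ 1 := Real.cos_le_one C
  have hprod : |Real.sin A * Real.sin B * Real.cos C| ≤ 1 / 100 := by
    rw [abs_mul, abs_mul]
    calc |Real.sin A| * |Real.sin B| * |Real.cos C|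
        ≤ (1/10) * (1/10) * 1 := by
          apply mul_le_mul _ (Real.abs_cos_le_one C) (abs_nonneg _) (by norm_num)
          exact mul_le_mul hsA hsB (abs_nonneg _) (by norm_num)
      _ = 1 / 100 := by norm_num
  have habs := abs_le.1 hprod
  nlinarith [mul_le_mul hcA hcB (by norm_num) (by linarith : (0:ℝ) ≤ Real.cos A),
    mul_pos (lt_of_lt_of_le (by norm_num) hcA) (lt_of_lt_of_le (by norm_num) hcB)]
end

section
/- Fix s ∈ ℝ and N ≥ 2, and let û₀(ξ) = N^{−s}·χ_{A_N}(ξ) with A_N = {ξ ∈ ℝ : N − 1/2 ≤ |ξ| ≤ N + 1/2}. Then for every ξ with |ξ| ≤ 1/2, the convolution satisfies (û₀ ∗ û₀)(ξ) = ∫_ℝ û₀(ξ₁) û₀(ξ − ξ₁) dξ₁ ≥ c · N^{−2s} for some absolute constant c > 0 independent of N and ξ. -/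
noncomputable def uhat (s N ξ : ℝ) : ℝ :=
  N ^ (-s) * Set.indicator {ξ : ℝ | N - 1/2 ≤ |ξ| ∧ |ξ| ≤ N + 1/2} (fun _ => (1:ℝ)) ξ

theorem stmt_5 (s : ℝ) :
    ∃ c > (0:ℝ), ∀ N : ℝ, 2 ≤ N → ∀ ξ : ℝ, |ξ| ≤ 1/2 →
      c * N ^ (-2 * s) ≤ ∫ ξ₁ : ℝ, uhat s N ξ₁ * uhat s N (ξ - ξ₁) := by
  refine ⟨1/4, by norm_num, fun N hN ξ hξ => ?_⟩
  have hN0 : (0:ℝ) < N := by linarith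
  obtain ⟨hξ1, hξ2⟩ := abs_le.mp hξ
  set A : Set ℝ := {ξ : ℝ | N - 1/2 ≤ |ξ| ∧ |ξ| ≤ N + 1/2} with hA
  have hAmeas : MeasurableSet A := by
    apply MeasurableSet.inter
    · exact measurableSet_le measurable_const measurable_abs
    · exact measurableSet_le measurable_abs measurable_const
  set S : Set ℝ := A ∩ ((fun ξ₁ => ξ - ξ₁) ⁻¹' A) with hS
  have hSmeas : MeasurableSet S :=
    hAmeas.inter (hAmeas.preimage (measurable_const.sub measurable_id))
  have hfun : ∀ x, uhat s N x * uhat s N (ξ - x)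
      = S.indicator (fun _ => N ^ (-s) * N ^ (-s)) x := by
    intro x
    simp only [uhat, hS, Set.indicator, Set.mem_inter_iff, Set.mem_preimage, ← hA]
    by_cases h1 : x ∈ A <;> by_cases h2 : ξ - x ∈ A <;> simp [h1, h2] <;> ring
  set a : ℝ := ξ/2 - N - 1/8 with ha
  set b : ℝ := ξ/2 - N + 1/8 with hb
  have hsub : Set.Icc a b ⊆ S := by
    rintro x ⟨hx1, hx2⟩
    have hxneg : x < 0 := by simp only [ha, hb] at hx1 hx2; linarith
    have hpos : 0 < ξ - x := by simp only [ha, hb] at hx1 hx2; linarith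
    constructor
    · refine ⟨?_, ?_⟩ <;> rw [abs_of_neg hxneg] <;>
        simp only [ha, hb] at hx1 hx2 <;> linarith
    · refine ⟨?_, ?_⟩ <;> rw [abs_of_pos hpos] <;>
        simp only [ha, hb] at hx1 hx2 <;> linarith
  have hSsub : S ⊆ Set.Icc (-(N + 1/2)) (N + 1/2) := by
    rintro x ⟨⟨_, hx2⟩, _⟩
    exact abs_le.mp hx2
  have hfin : MeasureTheory.volume S ≠ ⊤ := by
    refine ne_top_of_le_ne_top ?_ (MeasureTheory.measure_mono hSsub)
    simp [Real.volume_Icc]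
  have hvol : (1/4 : ℝ) ≤ (MeasureTheory.volume S).toReal := by
    have h1 : MeasureTheory.volume (Set.Icc a b) ≤ MeasureTheory.volume S :=
      MeasureTheory.measure_mono hsub
    have h2 : MeasureTheory.volume (Set.Icc a b) = ENNReal.ofReal (1/4) := by
      rw [Real.volume_Icc]; congr 1; simp only [ha, hb]; ring
    have h3 := ENNReal.toReal_mono hfin h1
    rw [h2, ENNReal.toReal_ofReal (by norm_num)] at h3
    exact h3
  have hint : (∫ ξ₁ : ℝ, uhat s N ξ₁ * uhat s N (ξ - ξ₁))
      = (MeasureTheory.volume S).toReal * (N ^ (-s) * N ^ (-s)) := by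
    simp_rw [hfun]
    rw [MeasureTheory.integral_indicator_const _ hSmeas]
    simp [mul_comm, MeasureTheory.measureReal_def]
  have hrp : N ^ (-2 * s) = N ^ (-s) * N ^ (-s) := by
    rw [← Real.rpow_add hN0]; ring_nf
  have hpos : (0:ℝ) < N ^ (-s) * N ^ (-s) := by positivity
  rw [hint, hrp]
  nlinarith [hpos, hvol]
end

section
/- With A(ξ), ϱ, and the generic regime as above, define ς(r) = ((1 − a r²)(1 + d r²)/((1 − c r²)(1 + b r²)))^{1/2} and the 3×3 matrix P(ξ) with columns: first column (0, −ξ₂/|ξ|, ξ₁/|ξ|)ᵀ, second column (ς(|ξ|), ξ₁/|ξ|, ξ₂/|ξ|)ᵀ, third column (−ς(|ξ|), ξ₁/|ξ|, ξ₂/|ξ|)ᵀ. Then P(ξ) is invertible and P(ξ)^{−1} A(ξ) P(ξ) = diag(0, ϱ(|ξ|), −ϱ(|ξ|)). -/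
noncomputable def nrm2 (ξ : ℝ × ℝ) : ℝ := Real.sqrt (ξ.1 ^ 2 + ξ.2 ^ 2)

noncomputable def omegaA (a b r : ℝ) : ℝ := (1 - a * r ^ 2) / (1 + b * r ^ 2)

noncomputable def varrho (a b c d r : ℝ) : ℝ :=
  Real.sqrt ((1 - a * r ^ 2) * (1 - c * r ^ 2) / ((1 + b * r ^ 2) * (1 + d * r ^ 2)))

noncomputable def varsigma (a b c d r : ℝ) : ℝ :=
  Real.sqrt ((1 - a * r ^ 2) * (1 + d * r ^ 2) / ((1 - c * r ^ 2) * (1 + b * r ^ 2)))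

noncomputable def Amat (a b c d : ℝ) (ξ : ℝ × ℝ) : Matrix (Fin 3) (Fin 3) ℝ :=
  !![0, (ξ.1 / nrm2 ξ) * omegaA a b (nrm2 ξ), (ξ.2 / nrm2 ξ) * omegaA a b (nrm2 ξ);
     (ξ.1 / nrm2 ξ) * omegaA c d (nrm2 ξ), 0, 0;
     (ξ.2 / nrm2 ξ) * omegaA c d (nrm2 ξ), 0, 0]

noncomputable def Pmat (a b c d : ℝ) (ξ : ℝ × ℝ) : Matrix (Fin 3) (Fin 3) ℝ :=
  !![0, varsigma a b c d (nrm2 ξ), -varsigma a b c d (nrm2 ξ);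
     -ξ.2 / nrm2 ξ, ξ.1 / nrm2 ξ, ξ.1 / nrm2 ξ;
     ξ.1 / nrm2 ξ, ξ.2 / nrm2 ξ, ξ.2 / nrm2 ξ]

lemma varsigma_pos (a b c d r : ℝ) (ha : a < 0) (hc : c < 0) (hb : 0 < b) (hd : 0 < d) :
    0 < varsigma a b c d r := by
  have hA : 0 < 1 - a * r ^ 2 := by nlinarith [sq_nonneg r]
  have hC : 0 < 1 - c * r ^ 2 := by nlinarith [sq_nonneg r]
  have hB : 0 < 1 + b * r ^ 2 := by nlinarith [sq_nonneg r]
  have hD : 0 < 1 + d * r ^ 2 := by nlinarith [sq_nonneg r]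
  exact Real.sqrt_pos.mpr (by positivity)

lemma varsigma_mul_varrho (a b c d r : ℝ) (ha : a < 0) (hc : c < 0) (hb : 0 < b) (hd : 0 < d) :
    varsigma a b c d r * varrho a b c d r = omegaA a b r := by
  have hA : 0 < 1 - a * r ^ 2 := by nlinarith [sq_nonneg r]
  have hC : 0 < 1 - c * r ^ 2 := by nlinarith [sq_nonneg r]
  have hB : 0 < 1 + b * r ^ 2 := by nlinarith [sq_nonneg r]
  have hD : 0 < 1 + d * r ^ 2 := by nlinarith [sq_nonneg r]
  rw [varsigma, varrho, ← Real.sqrt_mul (by positivity)]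
  have h : (1 - a * r ^ 2) * (1 + d * r ^ 2) / ((1 - c * r ^ 2) * (1 + b * r ^ 2)) *
      ((1 - a * r ^ 2) * (1 - c * r ^ 2) / ((1 + b * r ^ 2) * (1 + d * r ^ 2))) =
      ((1 - a * r ^ 2) / (1 + b * r ^ 2)) ^ 2 := by
    rw [div_mul_div_comm, div_pow, div_eq_div_iff (by positivity) (by positivity)]; ring
  rw [h, Real.sqrt_sq (by positivity)]; rfl

lemma omegaC_mul_varsigma (a b c d r : ℝ) (ha : a < 0) (hc : c < 0) (hb : 0 < b) (hd : 0 < d) :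
    omegaA c d r * varsigma a b c d r = varrho a b c d r := by
  have hA : 0 < 1 - a * r ^ 2 := by nlinarith [sq_nonneg r]
  have hC : 0 < 1 - c * r ^ 2 := by nlinarith [sq_nonneg r]
  have hB : 0 < 1 + b * r ^ 2 := by nlinarith [sq_nonneg r]
  have hD : 0 < 1 + d * r ^ 2 := by nlinarith [sq_nonneg r]
  have h1 : omegaA c d r = Real.sqrt (((1 - c * r ^ 2) / (1 + d * r ^ 2)) ^ 2) := by
    rw [Real.sqrt_sq (by positivity)]; rfl
  rw [h1, varsigma, varrho, ← Real.sqrt_mul (by positivity)]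
  congr 1
  field_simp

theorem stmt_7 (a b c d : ℝ) (ha : a < 0) (hc : c < 0) (hb : 0 < b) (hd : 0 < d)
    (ξ : ℝ × ℝ) (hξ : ξ ≠ 0) :
    IsUnit (Pmat a b c d ξ) ∧
      (Pmat a b c d ξ)⁻¹ * Amat a b c d ξ * Pmat a b c d ξ =
        Matrix.diagonal ![0, varrho a b c d (nrm2 ξ), -varrho a b c d (nrm2 ξ)] := by
  set r := nrm2 ξ with hr
  have hsq : 0 < ξ.1 ^ 2 + ξ.2 ^ 2 := by
    rcases (Prod.mk.injEq ξ.1 ξ.2 0 0 ▸ (by simpa [Prod.ext_iff] using hξ) : ¬(ξ.1 = 0 ∧ ξ.2 = 0)) with h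
    rcases not_and_or.mp h with h | h <;> positivity
  have hrpos : 0 < r := by rw [hr, nrm2]; positivity
  have hr2 : r ^ 2 = ξ.1 ^ 2 + ξ.2 ^ 2 := by
    rw [hr, nrm2, Real.sq_sqrt hsq.le]
  have hxy : (ξ.1 / r) ^ 2 + (ξ.2 / r) ^ 2 = 1 := by
    field_simp
    linarith [hr2]
  set s := varsigma a b c d r with hs
  have hspos : 0 < s := varsigma_pos a b c d r ha hc hb hd
  set ρ := varrho a b c d r with hρ
  have h1 : s * ρ = omegaA a b r := varsigma_mul_varrho a b c d r ha hc hb hd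
  have h2 : omegaA c d r * s = ρ := omegaC_mul_varsigma a b c d r ha hc hb hd
  -- determinant
  have hdet : (Pmat a b c d ξ).det = 2 * s := by
    simp [Pmat, Matrix.det_fin_three, ← hr, ← hs]
    linear_combination 2 * s * hxy
  have hdetne : (Pmat a b c d ξ).det ≠ 0 := by rw [hdet]; positivity
  have hunit : IsUnit (Pmat a b c d ξ) := by
    rw [Matrix.isUnit_iff_isUnit_det]
    exact isUnit_iff_ne_zero.mpr hdetne
  clear_value r s ρ
  refine ⟨hunit, ?_⟩
  have hAP : Amat a b c d ξ * Pmat a b c d ξ =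
      Pmat a b c d ξ * Matrix.diagonal ![0, ρ, -ρ] := by
    ext i j
    rw [Matrix.mul_apply, Matrix.mul_apply]
    fin_cases i <;> fin_cases j <;>
      simp [Amat, Pmat, Fin.sum_univ_three, Matrix.diagonal, ← hr, ← hs]
    all_goals first
        | ring1
        | linear_combination omegaA a b r * hxy - h1
        | linear_combination (ξ.1 / r) * h2
        | linear_combination (ξ.2 / r) * h2
  rw [Matrix.mul_assoc, hAP, ← Matrix.mul_assoc,
    Matrix.nonsing_inv_mul _ (isUnit_iff_ne_zero.mpr hdetne), Matrix.one_mul]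
end

section
/- Let ϱ_B(r) = (1 + r²/6)^{−1}. There exists N₀ such that for all N ≥ N₀, with T = 1/1000, for all s, t with 0 ≤ s ≤ t ≤ T and all ξ, κ ∈ ℝ² with N/2 ≤ |κ| ≤ 2N, N/2 ≤ |ξ − κ| ≤ 2N, 1/2 ≤ |ξ| ≤ 2: ((ξ·κ)/(|ξ||κ|))·sin(|ξ|ϱ_B(|ξ|)t)·sin(|ξ−κ|ϱ_B(|ξ−κ|)s)·cos(|κ|ϱ_B(|κ|)s) + (((κ−ξ)·κ)/(|ξ−κ||κ|))·(1/2)·cos(|ξ|ϱ_B(|ξ|)t)·cos(|ξ−κ|ϱ_B(|ξ−κ|)s)·cos(|κ|ϱ_B(|κ|)s) ≥ (1/16)·(((κ−ξ)·κ)/(|ξ−κ||κ|) − 1/2). -/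
set_option maxHeartbeats 1000000


def dot2 (u v : ℝ × ℝ) : ℝ := u.1 * v.1 + u.2 * v.2

noncomputable def varrhoB (r : ℝ) : ℝ := (1 + r ^ 2 / 6)⁻¹

lemma nrm2_nonneg (u : ℝ × ℝ) : 0 ≤ nrm2 u := Real.sqrt_nonneg _

lemma nrm2_sq (u : ℝ × ℝ) : (nrm2 u) ^ 2 = u.1 ^ 2 + u.2 ^ 2 := by
  rw [nrm2, Real.sq_sqrt]; positivity

lemma nrm2_sub_comm (u v : ℝ × ℝ) : nrm2 (u - v) = nrm2 (v - u) := by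
  simp only [nrm2, Prod.fst_sub, Prod.snd_sub]
  ring_nf

lemma abs_dot2_le (u v : ℝ × ℝ) : |dot2 u v| ≤ nrm2 u * nrm2 v := by
  have h2 : (dot2 u v) ^ 2 ≤ (nrm2 u * nrm2 v) ^ 2 := by
    rw [mul_pow, nrm2_sq, nrm2_sq, dot2]
    nlinarith [sq_nonneg (u.1 * v.2 - u.2 * v.1)]
  have h3 := Real.sqrt_le_sqrt h2
  rwa [Real.sqrt_sq_eq_abs, Real.sqrt_sq (mul_nonneg (nrm2_nonneg u) (nrm2_nonneg v))] at h3

lemma cos_half (x : ℝ) (h0 : 0 ≤ x) (h1 : x ≤ 1) : (1:ℝ)/2 ≤ Real.cos x := by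
  have := Real.one_sub_sq_div_two_le_cos (x := x)
  nlinarith

lemma phase_le (r : ℝ) (hr : 0 < r) : r * varrhoB r ≤ 6 / r := by
  have h : (0:ℝ) < 1 + r ^ 2 / 6 := by positivity
  have he : r * varrhoB r = r / (1 + r ^ 2 / 6) := by
    rw [varrhoB]; exact (div_eq_mul_inv _ _).symm
  rw [he, div_le_div_iff₀ h hr]
  nlinarith

lemma core (c1 X sa sb ca cb cc : ℝ)
    (h1 : |c1| ≤ 1) (h2 : 0 ≤ sa) (h3 : sa ≤ 1/500)
    (h4 : |sb| ≤ 1) (h5 : 0 ≤ X) (h6 : X ≤ 1)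
    (h7 : (1:ℝ)/2 ≤ ca) (h8 : ca ≤ 1) (h9 : (1:ℝ)/2 ≤ cb) (h10 : cb ≤ 1)
    (h11 : (1:ℝ)/2 ≤ cc) (h12 : cc ≤ 1) :
    c1 * sa * sb * cc + X * (1/2) * ca * cb * cc ≥ (1/16) * (X - 1/2) := by
  have hc1 : -1 ≤ c1 := by cases abs_le.mp h1; linarith
  have hc1' : c1 ≤ 1 := (abs_le.mp h1).2
  have hsb : -1 ≤ sb := (abs_le.mp h4).1
  have hsb' : sb ≤ 1 := (abs_le.mp h4).2
  have hcc : |cc| ≤ 1 := abs_le.mpr ⟨by linarith, h12⟩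
  have habs : |c1 * sb * cc| ≤ 1 := by
    rw [abs_mul, abs_mul]
    exact mul_le_one₀ (mul_le_one₀ h1 (abs_nonneg _) h4) (abs_nonneg _) hcc
  have hge : -1 ≤ c1 * sb * cc := (abs_le.mp habs).1
  have ht1 : c1 * sa * sb * cc ≥ -(1/500) := by
    have heq : c1 * sa * sb * cc = sa * (c1 * sb * cc) := by ring
    nlinarith [mul_le_mul_of_nonneg_left hge h2]
  have ht2 : X * (1/2) * ca * cb * cc ≥ X / 16 := by
    nlinarith [mul_nonneg h5 (by linarith : (0:ℝ) ≤ ca),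
      mul_nonneg (mul_nonneg h5 (by linarith : (0:ℝ) ≤ ca)) (by linarith : (0:ℝ) ≤ cb)]
  linarith

theorem stmt_10 :
    ∃ N₀ : ℝ, ∀ N : ℝ, N₀ ≤ N →
      ∀ s t : ℝ, 0 ≤ s → s ≤ t → t ≤ 1/1000 →
      ∀ ξ κ : ℝ × ℝ,
        N / 2 ≤ nrm2 κ → nrm2 κ ≤ 2 * N →
        N / 2 ≤ nrm2 (ξ - κ) → nrm2 (ξ - κ) ≤ 2 * N →
        1 / 2 ≤ nrm2 ξ → nrm2 ξ ≤ 2 →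
        (dot2 ξ κ / (nrm2 ξ * nrm2 κ)) *
            Real.sin (nrm2 ξ * varrhoB (nrm2 ξ) * t) *
            Real.sin (nrm2 (ξ - κ) * varrhoB (nrm2 (ξ - κ)) * s) *
            Real.cos (nrm2 κ * varrhoB (nrm2 κ) * s)
          + (dot2 (κ - ξ) κ / (nrm2 (ξ - κ) * nrm2 κ)) * (1 / 2) *
              Real.cos (nrm2 ξ * varrhoB (nrm2 ξ) * t) *
              Real.cos (nrm2 (ξ - κ) * varrhoB (nrm2 (ξ - κ)) * s) *
              Real.cos (nrm2 κ * varrhoB (nrm2 κ) * s)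
          ≥ (1 / 16) * (dot2 (κ - ξ) κ / (nrm2 (ξ - κ) * nrm2 κ) - 1 / 2) := by
  refine ⟨8, fun N hN s t hs hst ht ξ κ hκ1 hκ2 hB1 hB2 hA1 hA2 => ?_⟩
  have hApos : (0:ℝ) < nrm2 ξ := lt_of_lt_of_le (by norm_num) hA1
  have hBpos : (0:ℝ) < nrm2 (ξ - κ) := lt_of_lt_of_le (by linarith) hB1
  have hCpos : (0:ℝ) < nrm2 κ := lt_of_lt_of_le (by linarith) hκ1
  have hB4 : (4:ℝ) ≤ nrm2 (ξ - κ) := le_trans (by linarith) hB1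
  have hC4 : (4:ℝ) ≤ nrm2 κ := le_trans (by linarith) hκ1
  have ht0 : 0 ≤ t := le_trans hs hst
  have hs1000 : s ≤ 1/1000 := le_trans hst ht
  have hρA : 0 < varrhoB (nrm2 ξ) := by rw [varrhoB]; positivity
  have hρB : 0 < varrhoB (nrm2 (ξ - κ)) := by rw [varrhoB]; positivity
  have hρC : 0 < varrhoB (nrm2 κ) := by rw [varrhoB]; positivity
  -- phase bounds
  have ha0 : 0 ≤ nrm2 ξ * varrhoB (nrm2 ξ) * t := by positivity
  have ha1 : nrm2 ξ * varrhoB (nrm2 ξ) * t ≤ 1/500 := by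
    have h1 : varrhoB (nrm2 ξ) ≤ 1 := by
      rw [varrhoB]
      have h : (1:ℝ) ≤ 1 + (nrm2 ξ) ^ 2 / 6 := by nlinarith [sq_nonneg (nrm2 ξ)]
      exact inv_le_one_of_one_le₀ h
    have h2 : nrm2 ξ * varrhoB (nrm2 ξ) ≤ 2 := by nlinarith
    nlinarith
  have hb0 : 0 ≤ nrm2 (ξ - κ) * varrhoB (nrm2 (ξ - κ)) * s := by positivity
  have hb1 : nrm2 (ξ - κ) * varrhoB (nrm2 (ξ - κ)) * s ≤ 1 := by
    have h1 := phase_le (nrm2 (ξ - κ)) hBpos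
    have h2 : 6 / nrm2 (ξ - κ) ≤ 3/2 := by
      rw [div_le_iff₀ hBpos]; linarith
    have h3 : nrm2 (ξ - κ) * varrhoB (nrm2 (ξ - κ)) ≤ 3/2 := le_trans h1 h2
    nlinarith [mul_le_mul_of_nonneg_right h3 hs]
  have hc0 : 0 ≤ nrm2 κ * varrhoB (nrm2 κ) * s := by positivity
  have hc1 : nrm2 κ * varrhoB (nrm2 κ) * s ≤ 1 := by
    have h1 := phase_le (nrm2 κ) hCpos
    have h2 : 6 / nrm2 κ ≤ 3/2 := by
      rw [div_le_iff₀ hCpos]; linarith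
    have h3 : nrm2 κ * varrhoB (nrm2 κ) ≤ 3/2 := le_trans h1 h2
    nlinarith [mul_le_mul_of_nonneg_right h3 hs]
  -- coefficient bounds
  have hcoef1 : |dot2 ξ κ / (nrm2 ξ * nrm2 κ)| ≤ 1 := by
    rw [abs_div, abs_of_pos (mul_pos hApos hCpos), div_le_one (mul_pos hApos hCpos)]
    exact abs_dot2_le ξ κ
  have hdotBC : |dot2 (κ - ξ) κ| ≤ nrm2 (ξ - κ) * nrm2 κ := by
    rw [nrm2_sub_comm]
    exact abs_dot2_le (κ - ξ) κ
  have hXnonneg : 0 ≤ dot2 (κ - ξ) κ / (nrm2 (ξ - κ) * nrm2 κ) := by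
    apply div_nonneg _ (le_of_lt (mul_pos hBpos hCpos))
    have h1 : dot2 (κ - ξ) κ = (κ.1 ^ 2 + κ.2 ^ 2) - dot2 ξ κ := by
      simp only [dot2, Prod.fst_sub, Prod.snd_sub]; ring
    have h3 : κ.1 ^ 2 + κ.2 ^ 2 = (nrm2 κ) ^ 2 := (nrm2_sq κ).symm
    have h4 : dot2 ξ κ ≤ nrm2 ξ * nrm2 κ := le_trans (le_abs_self _) (abs_dot2_le ξ κ)
    nlinarith [mul_le_mul_of_nonneg_right hA2 (le_of_lt hCpos),
      mul_le_mul_of_nonneg_left hC4 (le_of_lt hCpos)]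
  have hXle : dot2 (κ - ξ) κ / (nrm2 (ξ - κ) * nrm2 κ) ≤ 1 := by
    rw [div_le_one (mul_pos hBpos hCpos)]
    exact le_trans (le_abs_self _) hdotBC
  -- apply core
  refine core _ _ _ _ _ _ _ hcoef1 ?_ ?_ (Real.abs_sin_le_one _) hXnonneg hXle
    (cos_half _ ha0 (by linarith)) (Real.cos_le_one _)
    (cos_half _ hb0 hb1) (Real.cos_le_one _)
    (cos_half _ hc0 hc1) (Real.cos_le_one _)
  · exact Real.sin_nonneg_of_nonneg_of_le_pi ha0 (by linarith [Real.pi_gt_three])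
  · exact le_trans (Real.sin_le ha0) ha1
end
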